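/- Symmetry of the Igusa cusp form in q and q̃: the formal series χ₁₀ = p q q̃ · ∏_{(k,h,d)} (1 − p^k q^h q̃^d)^{c(4hd − k²)} ∈ A[[q, q̃]], where the product runs over all k ∈ ℤ and h, d ≥ 0 with either (h > 0 or d > 0), or (h = d = 0 and k < 0), is invariant under the continuous A-algebra automorphism of A[[q, q̃]] that exchanges q and q̃; i.e. χ₁₀(p, q, q̃) = χ₁₀(p, q̃, q). -/

import Mathlib

noncomputable section

/-- The coefficient field `A = ℚ((p))` of formal Laurent series in `p`. -/
abbrev A : Type := LaurentSeries ℚ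

/-- The Laurent variable `p ∈ A`. -/
def pL : A := HahnSeries.single 1 1

instance : TopologicalSpace A := ⊥

/-- The product (pi) topology on `R = A⟦q⟧`, coefficientwise. -/
instance : TopologicalSpace (PowerSeries A) :=
  inferInstanceAs (TopologicalSpace ((Unit →₀ ℕ) → A))

/-- `Fsq`, the formal expansion in `A⟦q⟧` of the square of the Jacobi theta quotient
`F = ϑ₁(z,τ)/η(τ)³` in the region `0 < |q| < |p| < 1`:
`Fsq = −(p − 2 + p⁻¹) ∏_{m ≥ 1} (1 − p q^m)²(1 − p⁻¹ q^m)²(1 − q^m)^{−4}`. -/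
def Fsq : PowerSeries A :=
  -(PowerSeries.C (pL - 2 + pL⁻¹)) *
    ∏' m : ℕ,
      ((1 - PowerSeries.C pL * PowerSeries.X ^ (m + 1)) ^ 2 *
       (1 - PowerSeries.C pL⁻¹ * PowerSeries.X ^ (m + 1)) ^ 2 *
       Ring.inverse ((1 - (PowerSeries.X : PowerSeries A) ^ (m + 1)) ^ 4))

/-- `∑_{k ≥ 1} k p^k ∈ A`, the expansion of `p/(1−p)²`. -/
def sumkpk : A := HahnSeries.ofPowerSeries ℤ ℚ (PowerSeries.mk fun k => (k : ℚ))

/-- The Weierstrass expansion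
`℘ = 1/12 + ∑_{k ≥ 1} k p^k + ∑_{k,r ≥ 1} k (p^k − 2 + p^{−k}) q^{kr} ∈ A⟦q⟧`. -/
def wp : PowerSeries A :=
  PowerSeries.C (1 / 12 + sumkpk) +
    ∑' kr : ℕ × ℕ,
      PowerSeries.C (((kr.1 + 1 : ℕ) : A) * (pL ^ (kr.1 + 1) - 2 + (pL⁻¹) ^ (kr.1 + 1))) *
        PowerSeries.X ^ ((kr.1 + 1) * (kr.2 + 1))

/-- `Z = −24·℘·Fsq ∈ A⟦q⟧`. -/
def Zjac : PowerSeries A := -24 * wp * Fsq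

/-- The product (pi) topology on `A⟦q⟧⟦q̃⟧`, coefficientwise. -/
instance : TopologicalSpace (PowerSeries (PowerSeries A)) :=
  inferInstanceAs (TopologicalSpace ((Unit →₀ ℕ) → PowerSeries A))

/-- Integer power in a ring (for invertible bases): `x^n` for `n ≥ 0`, and
`(x^{−n})⁻¹` (via `Ring.inverse`) for `n < 0`. -/
def fpow {R : Type*} [CommRing R] (x : R) (n : ℤ) : R :=
  if 0 ≤ n then x ^ n.toNat else Ring.inverse (x ^ (-n).toNat)

/-- The index set of the product defining `χ₁₀`: all `(k,h,d) ∈ ℤ × ℕ × ℕ` with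
`h > 0` or `d > 0`, or `h = d = 0` and `k < 0`. -/
def chiIndex : Set (ℤ × ℕ × ℕ) :=
  {x | 0 < x.2.1 ∨ 0 < x.2.2 ∨ (x.2.1 = 0 ∧ x.2.2 = 0 ∧ x.1 < 0)}

/-- The Igusa cusp form, as the Borcherds-type product
`χ₁₀ = p q q̃ ∏_{(k,h,d)} (1 − p^k q^h q̃^d)^{c(4hd − k²)} ∈ A⟦q,q̃⟧ = A⟦q⟧⟦q̃⟧`,
the product over all `k ∈ ℤ`, `h,d ≥ 0` with (`h > 0` or `d > 0`) or
(`h = d = 0` and `k < 0`). -/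
def chi10 (c : ℤ → ℤ) : PowerSeries (PowerSeries A) :=
  PowerSeries.C (PowerSeries.C pL * PowerSeries.X) * PowerSeries.X *
    ∏' i : chiIndex,
      fpow
        (1 - PowerSeries.C (PowerSeries.C (pL ^ (i.1.1 : ℤ)) *
              PowerSeries.X ^ i.1.2.1) * PowerSeries.X ^ i.1.2.2)
        (c (4 * (i.1.2.1 : ℤ) * (i.1.2.2 : ℤ) - (i.1.1) ^ 2))


namespace Chi10Aux

abbrev RR := PowerSeries (PowerSeries A)

instance : DiscreteTopology A := ⟨rfl⟩
instance : T2Space (PowerSeries A) := inferInstanceAs (T2Space ((Unit →₀ ℕ) → A))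
instance : T2Space RR := inferInstanceAs (T2Space ((Unit →₀ ℕ) → PowerSeries A))

def swapF (f : RR) : RR :=
  PowerSeries.mk fun n => PowerSeries.mk fun m =>
    PowerSeries.coeff n (PowerSeries.coeff m f)

lemma coeff_swapF (f : RR) (a b : ℕ) :
    PowerSeries.coeff a (PowerSeries.coeff b (swapF f)) =
    PowerSeries.coeff b (PowerSeries.coeff a f) := by
  simp [swapF]

lemma ext2 {f g : RR}
    (h : ∀ a b : ℕ, PowerSeries.coeff a (PowerSeries.coeff b f) =
      PowerSeries.coeff a (PowerSeries.coeff b g)) : f = g :=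
  PowerSeries.ext fun b => PowerSeries.ext fun a => h a b

def swapE : RR ≃+* RR where
  toFun := swapF
  invFun := swapF
  left_inv f := ext2 fun a b => by simp [coeff_swapF]
  right_inv f := ext2 fun a b => by simp [coeff_swapF]
  map_add' f g := ext2 fun a b => by simp [coeff_swapF]
  map_mul' f g := ext2 fun a b => by
    simp only [coeff_swapF, PowerSeries.coeff_mul, map_sum]
    exact Finset.sum_comm

lemma coeff_swapE (f : RR) (a b : ℕ) :
    PowerSeries.coeff a (PowerSeries.coeff b (swapE f)) =
    PowerSeries.coeff b (PowerSeries.coeff a f) :=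
  coeff_swapF f a b

lemma continuous_swapF : Continuous swapF := by
  refine continuous_pi fun s => continuous_pi fun t => ?_
  exact (continuous_apply (Finsupp.single () (s ()))).comp
    (continuous_apply (Finsupp.single () (t ())))

lemma continuous_swapE : Continuous (swapE : RR → RR) := continuous_swapF

lemma continuous_swapE_symm : Continuous (swapE.symm : RR → RR) := continuous_swapF

lemma swapE_tprod {ι : Type*} (g : ι → RR) :
    swapE (∏' i, g i) = ∏' i, swapE (g i) := by
  by_cases h : Multipliable g
  · exact h.map_tprod (swapE : RR →* RR) continuous_swapE
  · rw [tprod_eq_one_of_not_multipliable h, tprod_eq_one_of_not_multipliable, map_one]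
    intro hm
    apply h
    have h2 := hm.hasProd.map (swapE.symm : RR →* RR) continuous_swapE_symm
    have h3 : ((swapE.symm : RR →* RR) ∘ fun i => swapE (g i)) = g := by
      funext i; simp
    rw [h3] at h2
    exact h2.multipliable

lemma swapE_inverse (x : RR) : swapE (Ring.inverse x) = Ring.inverse (swapE x) := by
  by_cases h : IsUnit x
  · obtain ⟨u, rfl⟩ := h
    rw [Ring.inverse_unit]
    obtain ⟨v, hv⟩ := u.isUnit.map (swapE : RR →* RR)
    have hv' : (v : RR) = swapE ↑u := hv
    rw [← hv', Ring.inverse_unit]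
    refine Units.eq_inv_of_mul_eq_one_left ?_
    rw [hv', ← map_mul]
    simp
  · rw [Ring.inverse_non_unit _ h, Ring.inverse_non_unit, map_zero]
    intro h2
    apply h
    have := h2.map (swapE.symm : RR →* RR)
    simpa using this

lemma swapE_fpow (x : RR) (n : ℤ) : swapE (fpow x n) = fpow (swapE x) n := by
  unfold fpow
  split_ifs <;> simp [map_pow, swapE_inverse]

lemma coeff2_C_mul_X_pow (g : A) (h d a b : ℕ) :
    PowerSeries.coeff a (PowerSeries.coeff b
      (PowerSeries.C (PowerSeries.C g * PowerSeries.X ^ h) *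
        PowerSeries.X ^ d)) = if b = d ∧ a = h then g else 0 := by
  rw [PowerSeries.coeff_C_mul_X_pow, apply_ite (PowerSeries.coeff a), map_zero,
    PowerSeries.coeff_C_mul_X_pow]
  split_ifs <;> tauto

lemma coeff2_one (a b : ℕ) :
    PowerSeries.coeff a (PowerSeries.coeff b (1 : RR))
      = if b = 0 ∧ a = 0 then 1 else 0 := by
  rw [PowerSeries.coeff_one, apply_ite (PowerSeries.coeff a), map_zero,
    PowerSeries.coeff_one]
  split_ifs <;> tauto

lemma swapE_pref :
    swapE (PowerSeries.C (PowerSeries.C pL * PowerSeries.X) * PowerSeries.X)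
      = PowerSeries.C (PowerSeries.C pL * PowerSeries.X) * PowerSeries.X := by
  have hX : (PowerSeries.X : RR) = PowerSeries.X ^ 1 := (pow_one _).symm
  have hX' : (PowerSeries.X : PowerSeries A) = PowerSeries.X ^ 1 := (pow_one _).symm
  apply ext2
  intro a b
  rw [coeff_swapE, hX, hX', coeff2_C_mul_X_pow, coeff2_C_mul_X_pow]
  exact if_congr and_comm rfl rfl

lemma swapE_factor (g : A) (h d : ℕ) :
    swapE (1 - PowerSeries.C (PowerSeries.C g * PowerSeries.X ^ h) *
        PowerSeries.X ^ d)
      = 1 - PowerSeries.C (PowerSeries.C g * PowerSeries.X ^ d) *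
        PowerSeries.X ^ h := by
  apply ext2
  intro a b
  rw [coeff_swapE, map_sub, map_sub, map_sub, map_sub, coeff2_one, coeff2_one,
    coeff2_C_mul_X_pow, coeff2_C_mul_X_pow]
  congr 1 <;> exact if_congr and_comm rfl rfl

def sw : chiIndex ≃ chiIndex where
  toFun x := ⟨(x.1.1, x.1.2.2, x.1.2.1), by
    obtain ⟨⟨k, h, d⟩, hx⟩ := x
    simp only [chiIndex, Set.mem_setOf_eq] at hx ⊢
    tauto⟩
  invFun x := ⟨(x.1.1, x.1.2.2, x.1.2.1), by
    obtain ⟨⟨k, h, d⟩, hx⟩ := x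
    simp only [chiIndex, Set.mem_setOf_eq] at hx ⊢
    tauto⟩
  left_inv x := by obtain ⟨⟨k, h, d⟩, hx⟩ := x; rfl
  right_inv x := by obtain ⟨⟨k, h, d⟩, hx⟩ := x; rfl

lemma swapE_chi10 (c : ℤ → ℤ) : swapE (chi10 c) = chi10 c := by
  unfold chi10
  set f : chiIndex → RR := fun i =>
    fpow
      (1 - PowerSeries.C (PowerSeries.C (pL ^ (i.1.1 : ℤ)) *
            PowerSeries.X ^ i.1.2.1) * PowerSeries.X ^ i.1.2.2)
      (c (4 * (i.1.2.1 : ℤ) * (i.1.2.2 : ℤ) - (i.1.1) ^ 2)) with hf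
  rw [map_mul, swapE_pref, swapE_tprod]
  congr 1
  have hkey : ∀ i : chiIndex, swapE (f i) = f (sw i) := by
    rintro ⟨⟨k, h, d⟩, hi⟩
    rw [hf]
    simp only [sw, Equiv.coe_fn_mk]
    rw [swapE_fpow, swapE_factor]
    have : (4 * (h : ℤ) * (d : ℤ) - k ^ 2) = (4 * (d : ℤ) * (h : ℤ) - k ^ 2) := by ring
    rw [this]
  calc (∏' i, swapE (f i)) = ∏' i, f (sw i) := tprod_congr hkey
    _ = ∏' i, f i := sw.tprod_eq f

end Chi10Aux

/-- Symmetry of the Igusa cusp form in `q` and `q̃`: `χ₁₀(p,q,q̃) = χ₁₀(p,q̃,q)`,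
i.e. the `q^a q̃^b` coefficient equals the `q^b q̃^a` coefficient. -/
theorem chi10_symmetric (c : ℤ → ℤ)
    (hc0 : ∀ m : ℤ, m < -1 → c m = 0)
    (hc : ∀ n : ℕ, ∀ k : ℤ, (PowerSeries.coeff n Zjac).coeff k = ((c (4 * n - k ^ 2) : ℤ) : ℚ)) :
    ∀ a b : ℕ,
      PowerSeries.coeff a (PowerSeries.coeff b (chi10 c)) =
      PowerSeries.coeff b (PowerSeries.coeff a (chi10 c)) := by
  intro a b
  conv_lhs => rw [← Chi10Aux.swapE_chi10 c]
  exact Chi10Aux.coeff_swapE (chi10 c) a b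

end
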